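/- Let V : Ω × ℝ → ℝ ∪ {±∞} be such that V(ω,·) is non-decreasing, concave, and upper semicontinuous for each ω, with V(ω,x) = -∞ for x < 0. Fix ω such that the relative interior of Dom V(ω,·) equals (0,∞). Then for all λ ≥ 1 and all x ∈ ℝ: V(ω, λx) ≤ 2λ( V(ω, x + 1/2) + V⁻(ω, 1/4) ), where V⁻ denotes the negative part. -/

import Mathlib

open Set

/-- Elasticity estimate: for `V(ω,·)` non-decreasing, concave, usc, equal
to `-∞` on `(-∞,0)`, and `ω` with `Ri(Dom V(ω,·)) = (0,∞)`, one has for all `λ ≥ 1`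
and `x ∈ ℝ`: `V(ω, λx) ≤ 2λ (V(ω, x + 1/2) + V⁻(ω, 1/4))`. -/
theorem elasticity_estimate
    {Ω : Type*} [MeasurableSpace Ω]
    (V : Ω → ℝ → EReal)
    (hmono : ∀ ω, Monotone (V ω))
    (hconc : ∀ ω, ∀ (u v : ℝ) (t : ℝ), 0 < t → t < 1 →
      ((t : ℝ) : EReal) * V ω u + ((1 - t : ℝ) : EReal) * V ω v ≤ V ω (t * u + (1 - t) * v))
    (husc : ∀ ω, UpperSemicontinuous (V ω))
    (hbot : ∀ ω, ∀ x : ℝ, x < 0 → V ω x = ⊥)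
    (ω : Ω)
    (hdom : intrinsicInterior ℝ {x : ℝ | ⊥ < V ω x} = Ioi (0 : ℝ)) :
    ∀ lam : ℝ, 1 ≤ lam → ∀ x : ℝ,
      V ω (lam * x) ≤
        ((2 * lam : ℝ) : EReal) * (V ω (x + 1 / 2) + max (-(V ω (1 / 4))) 0) := by
  intro lam hlam x
  have hlam0 : (0:ℝ) < lam := lt_of_lt_of_le one_pos hlam
  have hdom' : ∀ y : ℝ, 0 < y → ⊥ < V ω y := by
    intro y hy
    have hy' : y ∈ intrinsicInterior ℝ {x : ℝ | ⊥ < V ω x} := by rw [hdom]; exact hy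
    exact intrinsicInterior_subset (𝕜 := ℝ) (s := {x : ℝ | ⊥ < V ω x}) hy'
  rcases lt_or_ge x 0 with hx | hx
  · have h0 : V ω (lam * x) = ⊥ := hbot ω _ (mul_neg_of_pos_of_neg hlam0 hx)
    rw [h0]; exact bot_le
  -- x ≥ 0
  set z := x + 1 / 2 with hzdef
  clear_value z
  have hz2 : (1:ℝ)/2 ≤ z := by rw [hzdef]; linarith
  have hz0 : (0:ℝ) < z := by linarith
  have hb_bot : ⊥ < V ω z := hdom' z hz0
  have ha_bot : ⊥ < V ω (1/4) := hdom' _ (by norm_num)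
  have hab : V ω (1/4) ≤ V ω z := hmono ω (by linarith)
  have hM_ne_bot : max (-(V ω (1/4))) 0 ≠ ⊥ := by
    intro h
    have h0 : (0:EReal) ≤ max (-(V ω (1/4))) 0 := le_max_right _ _
    rw [h] at h0
    simp at h0
  have h2lam : (0:EReal) < ((2*lam:ℝ):EReal) := by
    exact_mod_cast (by linarith : (0:ℝ) < 2*lam)
  rcases eq_top_or_lt_top (V ω z) with hbtop | hbtop
  · have htop : V ω z + max (-(V ω (1/4))) 0 = ⊤ := by
      rw [hbtop]; exact EReal.top_add_of_ne_bot hM_ne_bot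
    rw [htop, EReal.mul_top_of_pos h2lam]
    exact le_top
  · have ha_top : V ω (1/4) < ⊤ := lt_of_le_of_lt hab hbtop
    set A := (V ω (1/4)).toReal with hAdef
    set B := (V ω z).toReal with hBdef
    have haA : V ω (1/4) = (A:EReal) := (EReal.coe_toReal ha_top.ne ha_bot.ne').symm
    have hbB : V ω z = (B:EReal) := (EReal.coe_toReal hbtop.ne hb_bot.ne').symm
    have hABr : A ≤ B := by
      rw [haA, hbB] at hab; exact_mod_cast hab
    set M := max (-A) 0 with hMdef
    have hMA : -A ≤ M := le_max_left _ _
    have hM0 : (0:ℝ) ≤ M := le_max_right _ _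
    have hMeq : max (-(V ω (1/4))) 0 = ((M:ℝ):EReal) := by
      rw [haA, ← EReal.coe_neg, hMdef,
        EReal.coe_strictMono.monotone.map_max]
      norm_num
    have hmono' : V ω (lam * x) ≤ V ω (lam * z) :=
      hmono ω (mul_le_mul_of_nonneg_left (by linarith) hlam0.le)
    have hRHS : ((2*lam:ℝ):EReal) * (V ω z + max (-(V ω (1/4))) 0)
        = ((2*lam*(B+M):ℝ):EReal) := by
      rw [hbB, hMeq, ← EReal.coe_add, ← EReal.coe_mul]
    have key : V ω (lam * z) ≤ ((2*lam*(B+M):ℝ):EReal) := by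
      rcases eq_or_lt_of_le hlam with h1 | h1
      · -- lam = 1
        rw [← h1, one_mul, hbB]
        exact_mod_cast (by nlinarith : B ≤ 2*1*(B+M))
      · -- lam > 1
        set t := (z - 1/4)/(lam*z - 1/4) with htdef
        clear_value t
        have hzz : z < lam * z := by nlinarith
        have hD : (0:ℝ) < lam*z - 1/4 := by linarith
        have ht0 : 0 < t := by rw [htdef]; exact div_pos (by linarith) hD
        have ht1 : t < 1 := by rw [htdef]; exact (div_lt_one hD).mpr (by linarith)
        have hcomb : t * (lam*z) + (1 - t) * (1/4) = z := by
          have hD' : lam*z*4 - 1 ≠ 0 := ne_of_gt (by linarith)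
          have htD : t * (lam*z - 1/4) = z - 1/4 := by rw [htdef]; exact div_mul_cancel₀ _ hD.ne'
          linear_combination htD
        have hc := hconc ω (lam*z) (1/4) t ht0 ht1
        rw [hcomb] at hc
        have hC_bot : ⊥ < V ω (lam*z) := hdom' _ (mul_pos hlam0 hz0)
        have hCtop : V ω (lam*z) ≠ ⊤ := by
          intro h
          rw [h, haA, hbB] at hc
          rw [EReal.mul_top_of_pos (by exact_mod_cast ht0), ← EReal.coe_mul,
            EReal.top_add_of_ne_bot (EReal.coe_ne_bot _)] at hc
          exact absurd hc (by simp)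
        set C := (V ω (lam*z)).toReal with hCdef
        have hcC : V ω (lam*z) = (C:EReal) := (EReal.coe_toReal hCtop hC_bot.ne').symm
        rw [hcC, haA, hbB] at hc
        have hcr : t*C + (1-t)*A ≤ B := by exact_mod_cast hc
        have hts : 1 ≤ 2*lam*t := by
          have heq : 2*lam*t = (2*lam*(z - 1/4))/(lam*z - 1/4) := by
            rw [htdef]; ring
          rw [heq, le_div_iff₀ hD]
          nlinarith [mul_nonneg hlam0.le (by linarith : (0:ℝ) ≤ z - 1/2)]
        have h1' : (0:ℝ) ≤ (2*lam*t - 1)*(B - A) :=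
          mul_nonneg (by linarith) (by linarith)
        have h2' : (0:ℝ) ≤ (2*lam - 1)*t*(A + M) :=
          mul_nonneg (mul_nonneg (by linarith) ht0.le) (by linarith)
        have h3' : (0:ℝ) ≤ t*M := mul_nonneg ht0.le hM0
        have hmul : t*C ≤ t*(2*lam*(B+M)) := by nlinarith
        have hfin : C ≤ 2*lam*(B+M) := le_of_mul_le_mul_left hmul ht0
        rw [hcC]
        exact_mod_cast hfin
    rw [hRHS]
    exact le_trans hmono' key
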